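/- Let ℓ : ℕ → ℕ satisfy ℓ(n) ≥ 2 for all n ≥ 1, let X = ∏_{n ≥ 1} Fin(ℓ(n)), and for each k ≥ 1 let q_k be a nontrivial permutation of Fin(ℓ(2k+1)). Define g : X → X by: if there exists k ≥ 1 with x_i = 0 for all 1 ≤ i ≤ 2k−1 and x_{2k} = 1, then g(x) agrees with x in all coordinates except coordinate 2k+1, where g(x)_{2k+1} = q_k(x_{2k+1}); otherwise g(x) = x (at most one such k exists for any x). Then g is a level-preserving homeomorphism of X; g fixes the all-zero sequence 0^∞; for every k ≥ 1 the map g restricts to the identity on the cylinder {x : x_i = 0 for all i ≤ 2k and x_{2k+1} = 1} but does not restrict to the identity on the cylinder {x : x_i = 0 for all i ≤ 2k}. Consequently g is a non-Hausdorff element of the group of level-preserving homeomorphisms of X. -/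

import Mathlib

/-- `g` is level-preserving: for every `n`, the first `n` coordinates of `g x` depend
only on the first `n` coordinates of `x`. -/
def LevelPreserving {ℓ : ℕ → ℕ} (g : (∀ n, Fin (ℓ n)) → (∀ n, Fin (ℓ n))) : Prop :=
  ∀ n : ℕ, ∀ x y : ∀ n, Fin (ℓ n), (∀ i < n, x i = y i) → ∀ i < n, g x i = g y i

/-- `g` is a non-Hausdorff element: it fixes a point `x`, is not the identity on any open
neighborhood of `x`, yet every open neighborhood of `x` contains a nonempty open subset
on which `g` is the identity. -/
def IsNonHausdorffElement {X : Type*} [TopologicalSpace X] (g : X → X) : Prop :=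
  ∃ x : X, g x = x ∧
    (∀ W : Set X, IsOpen W → x ∈ W → ¬ Set.EqOn g id W) ∧
    (∀ W : Set X, IsOpen W → x ∈ W → ∃ O : Set X, IsOpen O ∧ O.Nonempty ∧ O ⊆ W ∧
      Set.EqOn g id O)

/-- The map `g` of the path space `∏ n, Fin (ℓ n)` (coordinates indexed from `0`):
if the initial coordinates of `x` form a word `0…01` of (even) length `n ≥ 2`, then `g`
permutes coordinate `n` of `x` by `q n`, and `g` changes nothing otherwise.  (With
coordinates indexed from `1` as in the paper: if `x_i = 0` for all `i ≤ 2k-1` and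
`x_{2k} = 1`, then coordinate `2k+1` is permuted by `q_k`.) -/
def gmap (ℓ : ℕ → ℕ) (q : ∀ n, Equiv.Perm (Fin (ℓ n)))
    (x : ∀ n, Fin (ℓ n)) : ∀ n, Fin (ℓ n) :=
  fun n =>
    if 1 ≤ n ∧ n % 2 = 0 ∧ (∀ j < n - 1, (x j : ℕ) = 0) ∧ (x (n - 1) : ℕ) = 1 then
      q n (x n)
    else x n

section Aux
variable {ℓ : ℕ → ℕ}

def Cnd (ℓ : ℕ → ℕ) (n : ℕ) (x : ∀ n, Fin (ℓ n)) : Prop :=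
  1 ≤ n ∧ n % 2 = 0 ∧ (∀ j < n - 1, (x j : ℕ) = 0) ∧ (x (n - 1) : ℕ) = 1

instance {n : ℕ} {x : ∀ n, Fin (ℓ n)} : Decidable (Cnd ℓ n x) := by
  unfold Cnd; infer_instance

lemma gmap_pos {q} {x : ∀ n, Fin (ℓ n)} {n} (h : Cnd ℓ n x) :
    gmap ℓ q x n = q n (x n) := by
  unfold gmap; exact if_pos h

lemma gmap_neg {q} {x : ∀ n, Fin (ℓ n)} {n} (h : ¬ Cnd ℓ n x) :
    gmap ℓ q x n = x n := by
  unfold gmap; exact if_neg h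

lemma Cnd_congr {x y : ∀ n, Fin (ℓ n)} {n} (h : ∀ j < n, x j = y j) :
    Cnd ℓ n x ↔ Cnd ℓ n y := by
  unfold Cnd
  constructor <;> rintro ⟨h1, h2, h3, h4⟩ <;> refine ⟨h1, h2, fun j hj => ?_, ?_⟩
  · rw [← h j (by omega)]; exact h3 j hj
  · rw [← h (n-1) (by omega)]; exact h4
  · rw [h j (by omega)]; exact h3 j hj
  · rw [h (n-1) (by omega)]; exact h4

lemma Cnd_unique {x : ∀ n, Fin (ℓ n)} {n m} (hn : Cnd ℓ n x) (hm : Cnd ℓ m x) :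
    n = m := by
  obtain ⟨hn1, hn2, hn3, hn4⟩ := hn
  obtain ⟨hm1, hm2, hm3, hm4⟩ := hm
  by_contra hne
  rcases Nat.lt_or_ge n m with h | h
  · have h0 := hm3 (n-1) (by omega); omega
  · have h0 := hn3 (m-1) (by omega); omega

lemma gmap_prefix {q} {x : ∀ n, Fin (ℓ n)} {n} (j : ℕ) (hj : j < n)
    (hC : Cnd ℓ n x) : gmap ℓ q x j = x j := by
  by_cases h : Cnd ℓ j x
  · exact absurd (Cnd_unique h hC) (Nat.ne_of_lt hj)
  · exact gmap_neg h

lemma Cnd_gmap {q} {x : ∀ n, Fin (ℓ n)} {n} :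
    Cnd ℓ n (gmap ℓ q x) ↔ Cnd ℓ n x := by
  by_cases hm : ∃ m, Cnd ℓ m x
  · obtain ⟨m, hm⟩ := hm
    rcases Nat.lt_or_ge m n with h | h
    · constructor <;> intro hC <;> exfalso
      · have e : gmap ℓ q x (m-1) = x (m-1) :=
          gmap_prefix (m-1) (by have := hm.1; omega) hm
        have h0 := hC.2.2.1 (m-1) (by have := hm.1; have := hC.1; omega)
        rw [e] at h0
        have h1 := hm.2.2.2; omega
      · have h0 := hC.2.2.1 (m-1) (by have := hm.1; have := hC.1; omega)
        have h1 := hm.2.2.2; omega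
    · exact Cnd_congr (fun j hj => gmap_prefix j (by omega) hm)
  · push_neg at hm
    have e : gmap ℓ q x = x := funext fun j => gmap_neg (hm j)
    rw [e]

lemma gmap_gmap (q q' : ∀ n, Equiv.Perm (Fin (ℓ n))) (x : ∀ n, Fin (ℓ n)) (n : ℕ) :
    gmap ℓ q' (gmap ℓ q x) n = if Cnd ℓ n x then q' n (q n (x n)) else x n := by
  by_cases h : Cnd ℓ n x
  · rw [gmap_pos (Cnd_gmap.mpr h), gmap_pos h, if_pos h]
  · rw [gmap_neg (fun hc => h (Cnd_gmap.mp hc)), gmap_neg h, if_neg h]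

lemma gmap_continuous (q : ∀ n, Equiv.Perm (Fin (ℓ n))) : Continuous (gmap ℓ q) := by
  refine continuous_pi fun n => ?_
  have key : (fun x : ∀ n, Fin (ℓ n) => gmap ℓ q x n) =
      (fun v : ∀ j : Fin (n+1), Fin (ℓ j) =>
        if 1 ≤ n ∧ n % 2 = 0 ∧ (∀ j : Fin (n+1), (j : ℕ) < n - 1 → (v j : ℕ) = 0) ∧
            (v ⟨n - 1, by omega⟩ : ℕ) = 1 then
          q n (v ⟨n, by omega⟩)
        else v ⟨n, by omega⟩) ∘ (fun x (j : Fin (n+1)) => x j) := by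
    funext x
    show gmap ℓ q x n = _
    unfold gmap
    simp only [Function.comp_apply]
    refine if_congr ⟨fun ⟨h1,h2,h3,h4⟩ => ⟨h1, h2, fun j hj => h3 j hj, h4⟩,
      fun ⟨h1,h2,h3,h4⟩ => ⟨h1, h2, fun j hj => h3 ⟨j, by omega⟩ hj, h4⟩⟩ rfl rfl
  rw [key]
  exact continuous_of_discreteTopology.comp (continuous_pi fun j => continuous_apply _)

lemma isOpen_prefix (n : ℕ) (P : (∀ j : Fin n, Fin (ℓ j)) → Prop) :
    IsOpen {x : ∀ m, Fin (ℓ m) | P (fun j => x j)} := by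
  have : {x : ∀ m, Fin (ℓ m) | P (fun j => x j)} =
      (fun (x : ∀ m, Fin (ℓ m)) (j : Fin n) => x j) ⁻¹' {v | P v} := rfl
  rw [this]
  exact (isOpen_discrete _).preimage (continuous_pi fun j => continuous_apply _)

end Aux

section Main
variable {ℓ : ℕ → ℕ}

/-- `g` is the identity on the cylinder `0^{2k} 1`. -/
lemma eqOn_cyl (q : ∀ n, Equiv.Perm (Fin (ℓ n))) (k : ℕ) :
    Set.EqOn (gmap ℓ q) id
      {x : ∀ n, Fin (ℓ n) | (∀ j < 2 * k, (x j : ℕ) = 0) ∧ (x (2 * k) : ℕ) = 1} := by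
  intro x hx
  obtain ⟨hx1, hx2⟩ := hx
  funext n
  refine gmap_neg ?_
  rintro ⟨h1, h2, h3, h4⟩
  rcases Nat.lt_trichotomy (n - 1) (2 * k) with h | h | h
  · have := hx1 (n-1) h; omega
  · omega
  · have := h3 (2*k) (by omega); omega

/-- `g` is not the identity on the cylinder `0^{2k}`, given a nontrivial `q (2k+2)`. -/
lemma not_eqOn_cyl (hl : ∀ n, 2 ≤ ℓ n) (q : ∀ n, Equiv.Perm (Fin (ℓ n)))
    (k : ℕ) (hne : q (2 * k + 2) ≠ 1) :
    ¬ Set.EqOn (gmap ℓ q) id {x : ∀ n, Fin (ℓ n) | ∀ j < 2 * k, (x j : ℕ) = 0} := by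
  obtain ⟨b, hb⟩ : ∃ b, q (2 * k + 2) b ≠ b := by
    by_contra h
    push_neg at h
    exact hne (Equiv.ext fun c => (h c).trans (Equiv.Perm.one_apply c).symm)
  set z : ∀ n, Fin (ℓ n) :=
    fun n => (⟨0, Nat.lt_of_lt_of_le Nat.zero_lt_two (hl n)⟩ : Fin (ℓ n)) with hz
  set y : ∀ n, Fin (ℓ n) :=
    Function.update (Function.update z (2*k+1)
      (⟨1, Nat.lt_of_lt_of_le Nat.one_lt_two (hl (2*k+1))⟩ : Fin (ℓ (2*k+1)))) (2*k+2) b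
    with hy
  have hy1 : ∀ j, j ≠ 2*k+1 → j ≠ 2*k+2 → y j = z j := by
    intro j h1 h2
    rw [hy, Function.update_of_ne h2, Function.update_of_ne h1]
  have hy2 : (y (2*k+1) : ℕ) = 1 := by
    rw [hy, Function.update_of_ne (by omega), Function.update_self]
  have hy3 : y (2*k+2) = b := by rw [hy, Function.update_self]
  have hmem : y ∈ {x : ∀ n, Fin (ℓ n) | ∀ j < 2 * k, (x j : ℕ) = 0} := by
    intro j hj
    rw [hy1 j (by omega) (by omega)]
  have hC : Cnd ℓ (2*k+2) y := by
    refine ⟨by omega, by omega, fun j hj => ?_, ?_⟩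
    · rw [hy1 j (by omega) (by omega)]
    · rw [show 2*k+2-1 = 2*k+1 by omega]; exact hy2
  intro hEq
  have := congrFun (hEq hmem) (2*k+2)
  simp only [id_eq] at this
  rw [gmap_pos hC, hy3] at this
  exact hb this

end Main

/-- The explicitly defined map `g` is a level-preserving homeomorphism of the path space
`X = ∏ n, Fin (ℓ n)`, it fixes the all-zero sequence, it is the identity on each cylinder
`{x : x_i = 0 for i ≤ 2k, x_{2k+1} = 1}` but not on the cylinder
`{x : x_i = 0 for i ≤ 2k}` (1-indexed); consequently it is a non-Hausdorff element of the
group of level-preserving homeomorphisms of `X`. -/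
theorem stmt14 (ℓ : ℕ → ℕ) (hl : ∀ n, 2 ≤ ℓ n)
    (q : ∀ n, Equiv.Perm (Fin (ℓ n))) (hq : ∀ k, 1 ≤ k → q (2 * k) ≠ 1) :
    (IsHomeomorph (gmap ℓ q) ∧ LevelPreserving (gmap ℓ q)) ∧
    gmap ℓ q (fun n => (⟨0, Nat.lt_of_lt_of_le Nat.zero_lt_two (hl n)⟩ : Fin (ℓ n))) =
      (fun n => (⟨0, Nat.lt_of_lt_of_le Nat.zero_lt_two (hl n)⟩ : Fin (ℓ n))) ∧
    (∀ k : ℕ, 1 ≤ k →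
      Set.EqOn (gmap ℓ q) id
        {x : ∀ n, Fin (ℓ n) | (∀ j < 2 * k, (x j : ℕ) = 0) ∧ (x (2 * k) : ℕ) = 1}) ∧
    (∀ k : ℕ, 1 ≤ k →
      ¬ Set.EqOn (gmap ℓ q) id {x : ∀ n, Fin (ℓ n) | ∀ j < 2 * k, (x j : ℕ) = 0}) ∧
    IsNonHausdorffElement (gmap ℓ q) := by
  set z : ∀ n, Fin (ℓ n) :=
    fun n => (⟨0, Nat.lt_of_lt_of_le Nat.zero_lt_two (hl n)⟩ : Fin (ℓ n)) with hz
  -- not-EqOn on 0^{2k} cylinders, for all k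
  have hnot : ∀ k : ℕ,
      ¬ Set.EqOn (gmap ℓ q) id {x : ∀ n, Fin (ℓ n) | ∀ j < 2 * k, (x j : ℕ) = 0} := by
    intro k
    refine not_eqOn_cyl hl q k ?_
    have := hq (k+1) (by omega)
    rwa [show 2*(k+1) = 2*k+2 by ring] at this
  -- g fixes z
  have hfix : gmap ℓ q z = z := by
    funext n
    refine gmap_neg ?_
    rintro ⟨h1, h2, h3, h4⟩
    simp [hz] at h4
  -- homeomorphism
  have hhomeo : IsHomeomorph (gmap ℓ q) := by
    refine isHomeomorph_iff_exists_inverse.mpr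
      ⟨gmap_continuous q, gmap ℓ (fun n => (q n)⁻¹), fun x => funext fun n => ?_,
        fun x => funext fun n => ?_, gmap_continuous _⟩
    · rw [gmap_gmap]
      split_ifs with h
      · exact Equiv.symm_apply_apply _ _
      · rfl
    · rw [gmap_gmap]
      split_ifs with h
      · exact Equiv.apply_symm_apply _ _
      · rfl
  -- level preserving
  have hlev : LevelPreserving (gmap ℓ q) := by
    intro n x y h i hi
    by_cases hC : Cnd ℓ i x
    · have hC' : Cnd ℓ i y := (Cnd_congr (fun j hj => h j (by omega))).mp hC
      rw [gmap_pos hC, gmap_pos hC', h i hi]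
    · have hC' : ¬ Cnd ℓ i y :=
        fun hc => hC ((Cnd_congr (fun j hj => h j (by omega))).mpr hc)
      rw [gmap_neg hC, gmap_neg hC', h i hi]
  refine ⟨⟨hhomeo, hlev⟩, hfix, fun k _ => eqOn_cyl q k, fun k _ => hnot k, z, hfix, ?_, ?_⟩
  · -- no neighborhood of z on which g is the identity
    intro W hW hzW
    obtain ⟨I, u, hI, hsub⟩ := isOpen_pi_iff.mp hW z hzW
    set N := (I.sup id) + 1 with hN
    have hcyl : {y : ∀ n, Fin (ℓ n) | ∀ j < N, (y j : ℕ) = 0} ⊆ W := by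
      intro y hy
      refine hsub (Set.mem_pi.mpr fun i hi => ?_)
      have hiI : i ∈ I := hi
      have hiN : i < N := Nat.lt_succ_of_le (Finset.le_sup (f := id) hiI)
      have : y i = z i := Fin.ext (by simpa using hy i hiN)
      rw [this]
      exact (hI i hiI).2
    intro hEq
    refine hnot N (hEq.mono ?_)
    intro y hy
    exact hcyl fun j hj => hy j (by omega)
  · -- every neighborhood contains an open set on which g is the identity
    intro W hW hzW
    obtain ⟨I, u, hI, hsub⟩ := isOpen_pi_iff.mp hW z hzW
    set N := (I.sup id) + 1 with hN
    have hcyl : {y : ∀ n, Fin (ℓ n) | ∀ j < N, (y j : ℕ) = 0} ⊆ W := by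
      intro y hy
      refine hsub (Set.mem_pi.mpr fun i hi => ?_)
      have hiI : i ∈ I := hi
      have hiN : i < N := Nat.lt_succ_of_le (Finset.le_sup (f := id) hiI)
      have : y i = z i := Fin.ext (by simpa using hy i hiN)
      rw [this]
      exact (hI i hiI).2
    refine ⟨{x : ∀ n, Fin (ℓ n) | (∀ j < 2 * N, (x j : ℕ) = 0) ∧ (x (2 * N) : ℕ) = 1},
      ?_, ?_, ?_, eqOn_cyl q N⟩
    · -- open
      have heq : {x : ∀ n, Fin (ℓ n) | (∀ j < 2 * N, (x j : ℕ) = 0) ∧ (x (2 * N) : ℕ) = 1} =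
          {x : ∀ n, Fin (ℓ n) |
            (fun v : ∀ j : Fin (2*N+1), Fin (ℓ j) =>
              (∀ j : Fin (2*N+1), (j : ℕ) < 2 * N → (v j : ℕ) = 0) ∧
                (v ⟨2*N, by omega⟩ : ℕ) = 1) (fun j => x j)} := by
        ext x
        simp only [Set.mem_setOf_eq]
        exact ⟨fun ⟨h1, h2⟩ => ⟨fun j hj => h1 j hj, h2⟩,
          fun ⟨h1, h2⟩ => ⟨fun j hj => h1 ⟨j, by omega⟩ hj, h2⟩⟩
      rw [heq]
      exact isOpen_prefix (ℓ := ℓ) (2*N+1)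
        (fun v => (∀ j : Fin (2*N+1), (j : ℕ) < 2 * N → (v j : ℕ) = 0) ∧
          (v ⟨2*N, by omega⟩ : ℕ) = 1)
    · -- nonempty
      refine ⟨Function.update z (2*N)
        (⟨1, Nat.lt_of_lt_of_le Nat.one_lt_two (hl (2*N))⟩ : Fin (ℓ (2*N))), ?_, ?_⟩
      · intro j hj
        rw [Function.update_of_ne (by omega)]
      · rw [Function.update_self]
    · -- subset of W
      intro x hx
      exact hcyl fun j hj => hx.1 j (by omega)
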